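/- arXiv:1710.03198 — 4 statements merged into one kernel-verified Lean document; each statement's English description precedes it below -/
import Mathlib

section
/- Let A be a type equipped with a Mal'tsev operation p, and let R and S be two equivalence relations on A that are both compatible with p. Then the relational composites commute: for all x, z in A, (∃ y, S x y ∧ R y z) if and only if (∃ y, R x y ∧ S y z). -/
/-- A Mal'tsev operation on a type `A` is a ternary map `p` satisfying
`p x y y = x` and `p y y x = x`. -/
def IsMaltsevOp {A : Type*} (p : A → A → A → A) : Prop :=
  (∀ x y : A, p x y y = x) ∧ (∀ x y : A, p y y x = x)

/-- A binary relation `R` on `A` is compatible with a Mal'tsev operation `p`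
if it is closed under applying `p` componentwise. -/
def MaltsevCompat {A : Type*} (p : A → A → A → A) (R : A → A → Prop) : Prop :=
  ∀ a a' a'' b b' b'', R a b → R a' b' → R a'' b'' → R (p a a' a'') (p b b' b'')

lemma maltsev_aux {A : Type*} (p : A → A → A → A) (hp : IsMaltsevOp p)
    (R S : A → A → Prop) (hReq : Equivalence R) (hSeq : Equivalence S)
    (hRcomp : MaltsevCompat p R) (hScomp : MaltsevCompat p S) :
    ∀ x z : A, (∃ y, S x y ∧ R y z) → (∃ y, R x y ∧ S y z) := by
  rintro x z ⟨y, hxy, hyz⟩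
  refine ⟨p x y z, ?_, ?_⟩
  · have := hRcomp x y y x y z (hReq.refl x) (hReq.refl y) hyz
    rwa [hp.1] at this
  · have := hScomp x y z y y z hxy (hSeq.refl y) (hSeq.refl z)
    rwa [hp.2] at this

/-- Two equivalence relations compatible with a Mal'tsev operation commute
under relational composition. -/
theorem stmt_2 {A : Type*} (p : A → A → A → A) (hp : IsMaltsevOp p)
    (R S : A → A → Prop) (hReq : Equivalence R) (hSeq : Equivalence S)
    (hRcomp : MaltsevCompat p R) (hScomp : MaltsevCompat p S) :
    ∀ x z : A, (∃ y, S x y ∧ R y z) ↔ (∃ y, R x y ∧ S y z) := by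
  intro x z
  constructor
  · exact maltsev_aux p hp R S hReq hSeq hRcomp hScomp x z
  · exact maltsev_aux p hp S R hSeq hReq hScomp hRcomp x z
end

section
/- Let C be a finitely complete category. The following statements are equivalent: (1) every reflexive internal relation in C is an equivalence relation (i.e., C is a Mal'tsev category); (2) every reflexive internal relation in C is symmetric; (3) every reflexive internal relation in C is transitive; (4) every internal relation r : R ⟶ X ⨯ Y in C is difunctional; (5) every internal relation r : R ⟶ X ⨯ X in C is difunctional. -/
open CategoryTheory CategoryTheory.Limits

universe v u

variable {C : Type u} [Category.{v} C] [HasFiniteLimits C]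

attribute [local simp] prod.lift_fst prod.lift_snd prod.lift_fst_assoc prod.lift_snd_assoc
attribute [local simp] pullback.lift_fst pullback.lift_snd pullback.lift_fst_assoc pullback.lift_snd_assoc

/-- An internal relation `r : R ⟶ X ⨯ X` is reflexive if the diagonal factors through it. -/
def IsReflexiveRel {R X : C} (r : R ⟶ X ⨯ X) : Prop :=
  ∃ d : X ⟶ R, d ≫ r = prod.lift (𝟙 X) (𝟙 X)

/-- An internal relation `r : R ⟶ X ⨯ X` is symmetric if its composite with the twist
isomorphism factors through it. -/
def IsSymmetricRel {R X : C} (r : R ⟶ X ⨯ X) : Prop :=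
  ∃ s : R ⟶ R, s ≫ r = r ≫ (prod.braiding X X).hom

/-- An internal relation `r : R ⟶ X ⨯ X` is transitive if, with `P` the pullback of the
second component of `r` along the first (the object of composable pairs, with projections
`q₁, q₂ : P ⟶ R`), the induced morphism `⟨r₁ ∘ q₁, r₂ ∘ q₂⟩ : P ⟶ X ⨯ X` factors
through `r`. -/
def IsTransitiveRel {R X : C} (r : R ⟶ X ⨯ X) : Prop :=
  ∃ t : pullback (r ≫ prod.snd) (r ≫ prod.fst) ⟶ R,
    t ≫ r = prod.lift
      (pullback.fst (r ≫ prod.snd) (r ≫ prod.fst) ≫ r ≫ prod.fst)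
      (pullback.snd (r ≫ prod.snd) (r ≫ prod.fst) ≫ r ≫ prod.snd)

/-- An internal relation `r : R ⟶ X ⨯ X` is an equivalence relation if it is
reflexive, symmetric and transitive. -/
def IsEquivalenceRel {R X : C} (r : R ⟶ X ⨯ X) : Prop :=
  IsReflexiveRel r ∧ IsSymmetricRel r ∧ IsTransitiveRel r

/-- An internal relation `r : R ⟶ X ⨯ Y` is difunctional if, with
`S` the pullback of `r` along `tw ∘ (r₂ ⨯ r₁) : R ⨯ R ⟶ X ⨯ Y` and
`T` the pullback of `r` along `(r₁ ⨯ r₂) : R ⨯ R ⟶ X ⨯ Y` (both subobjects of `R ⨯ R`),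
the canonical monomorphism `S ∩ T ⟶ T` is an isomorphism. -/
def IsDifunctional {R X Y : C} (r : R ⟶ X ⨯ Y) : Prop :=
  IsIso (pullback.snd
    (pullback.fst (prod.map (r ≫ prod.snd) (r ≫ prod.fst) ≫ (prod.braiding Y X).hom) r)
    (pullback.fst (prod.map (r ≫ prod.fst) (r ≫ prod.snd)) r))

lemma lemA {R X Y : C} (r : R ⟶ X ⨯ Y) [Mono r] (m w : R ⨯ R ⟶ X ⨯ Y)
    (hbw : (prod.braiding R R).hom ≫ m = w)
    (g : pullback m r ⟶ pullback m r)
    (hg : g ≫ pullback.fst m r = pullback.fst m r ≫ (prod.braiding R R).hom) :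
    IsIso (pullback.snd (pullback.fst w r) (pullback.fst m r)) := by
  have key : pullback.fst m r ≫ w = (g ≫ pullback.snd m r) ≫ r := by
    calc pullback.fst m r ≫ w
        = pullback.fst m r ≫ (prod.braiding R R).hom ≫ m := by rw [hbw]
      _ = (g ≫ pullback.fst m r) ≫ m := by rw [hg, Category.assoc]
      _ = g ≫ pullback.fst m r ≫ m := by rw [Category.assoc]
      _ = g ≫ pullback.snd m r ≫ r := by rw [pullback.condition]
      _ = (g ≫ pullback.snd m r) ≫ r := by rw [Category.assoc]
  let ℓ : pullback m r ⟶ pullback w r := pullback.lift _ _ key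
  have hℓ : ℓ ≫ pullback.fst w r = pullback.fst m r := pullback.lift_fst _ _ _
  have hφc : ℓ ≫ pullback.fst w r = 𝟙 _ ≫ pullback.fst m r := by
    rw [hℓ, Category.id_comp]
  let φ : pullback m r ⟶ pullback (pullback.fst w r) (pullback.fst m r) :=
    pullback.lift ℓ (𝟙 _) hφc
  refine ⟨φ, ?_, by simp [φ]⟩
  apply pullback.hom_ext
  · rw [Category.assoc, pullback.lift_fst, Category.id_comp]
    have : Mono (pullback.fst w r) := pullback.fst_of_mono
    rw [← cancel_mono (pullback.fst w r), Category.assoc, hℓ, ← pullback.condition]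
  · simp [φ]

lemma lemC {R X Y : C} (r : R ⟶ X ⨯ Y) (m w : R ⨯ R ⟶ X ⨯ Y)
    (h : IsIso (pullback.snd (pullback.fst w r) (pullback.fst m r)))
    {Z : C} (c : Z ⟶ R ⨯ R) (p : Z ⟶ R) (hc : c ≫ m = p ≫ r) :
    ∃ q : Z ⟶ R, q ≫ r = c ≫ w := by
  set i := pullback.snd (pullback.fst w r) (pullback.fst m r) with hi
  let τ : Z ⟶ pullback m r := pullback.lift c p hc
  refine ⟨τ ≫ inv i ≫ pullback.fst (pullback.fst w r) (pullback.fst m r) ≫ pullback.snd w r, ?_⟩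
  have h1 : inv i ≫ pullback.fst (pullback.fst w r) (pullback.fst m r) ≫ pullback.fst w r
      = pullback.fst m r := by
    rw [pullback.condition, ← Category.assoc]
    show (inv i ≫ i) ≫ pullback.fst m r = pullback.fst m r
    rw [IsIso.inv_hom_id, Category.id_comp]
  calc (τ ≫ inv i ≫ pullback.fst _ _ ≫ pullback.snd w r) ≫ r
      = τ ≫ inv i ≫ pullback.fst _ _ ≫ pullback.snd w r ≫ r := by
        simp only [Category.assoc]
    _ = τ ≫ inv i ≫ pullback.fst _ _ ≫ pullback.fst w r ≫ w := by
        rw [pullback.condition]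
    _ = τ ≫ (inv i ≫ pullback.fst _ _ ≫ pullback.fst w r) ≫ w := by
        simp only [Category.assoc]
    _ = τ ≫ pullback.fst m r ≫ w := by rw [h1]
    _ = (τ ≫ pullback.fst m r) ≫ w := by rw [← Category.assoc]
    _ = c ≫ w := by rw [pullback.lift_fst]

/-- The "kernel-type" relation `T` on `R` associated to `r` is reflexive. -/
lemma reflT {R X Y : C} (r : R ⟶ X ⨯ Y) :
    IsReflexiveRel (pullback.fst (prod.map (r ≫ prod.fst) (r ≫ prod.snd)) r) :=
  ⟨pullback.lift (prod.lift (𝟙 R) (𝟙 R)) (𝟙 R)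
    (by apply Limits.prod.hom_ext <;> simp), by simp⟩

/-- From transitivity of `T`, a twist endomorphism of `T`. -/
lemma lemB {R X Y : C} (r : R ⟶ X ⨯ Y) (m : R ⨯ R ⟶ X ⨯ Y)
    (hm1 : m ≫ prod.fst = prod.fst ≫ r ≫ prod.fst)
    (hm2 : m ≫ prod.snd = prod.snd ≫ r ≫ prod.snd)
    (h : IsTransitiveRel (pullback.fst m r)) :
    ∃ g : pullback m r ⟶ pullback m r,
      g ≫ pullback.fst m r = pullback.fst m r ≫ (prod.braiding R R).hom := by
  obtain ⟨tr, htr⟩ := h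
  have cond : pullback.fst m r ≫ m = pullback.snd m r ≫ r := pullback.condition
  have c1 : pullback.fst m r ≫ prod.fst ≫ r ≫ prod.fst = pullback.snd m r ≫ r ≫ prod.fst := by
    calc pullback.fst m r ≫ prod.fst ≫ r ≫ prod.fst
        = pullback.fst m r ≫ m ≫ prod.fst := by rw [hm1]
      _ = (pullback.fst m r ≫ m) ≫ prod.fst := by rw [Category.assoc]
      _ = (pullback.snd m r ≫ r) ≫ prod.fst := by rw [cond]
      _ = pullback.snd m r ≫ r ≫ prod.fst := by rw [Category.assoc]
  have c2 : pullback.fst m r ≫ prod.snd ≫ r ≫ prod.snd = pullback.snd m r ≫ r ≫ prod.snd := by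
    calc pullback.fst m r ≫ prod.snd ≫ r ≫ prod.snd
        = pullback.fst m r ≫ m ≫ prod.snd := by rw [hm2]
      _ = (pullback.fst m r ≫ m) ≫ prod.snd := by rw [Category.assoc]
      _ = (pullback.snd m r ≫ r) ≫ prod.snd := by rw [cond]
      _ = pullback.snd m r ≫ r ≫ prod.snd := by rw [Category.assoc]
  have pf1 : prod.lift (pullback.fst m r ≫ prod.snd) (pullback.snd m r) ≫ m
      = (pullback.fst m r ≫ prod.snd) ≫ r := by
    apply Limits.prod.hom_ext
    · simp only [Category.assoc, hm1, prod.lift_fst_assoc]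
    · simp only [Category.assoc, hm2, prod.lift_snd_assoc]
      exact c2.symm
  have pf2 : prod.lift (pullback.snd m r) (pullback.fst m r ≫ prod.fst) ≫ m
      = (pullback.fst m r ≫ prod.fst) ≫ r := by
    apply Limits.prod.hom_ext
    · simp only [Category.assoc, hm1, prod.lift_fst_assoc]
      exact c1.symm
    · simp only [Category.assoc, hm2, prod.lift_snd_assoc]
  let e₁ : pullback m r ⟶ pullback m r :=
    pullback.lift (prod.lift (pullback.fst m r ≫ prod.snd) (pullback.snd m r))
      (pullback.fst m r ≫ prod.snd) pf1
  let e₂ : pullback m r ⟶ pullback m r :=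
    pullback.lift (prod.lift (pullback.snd m r) (pullback.fst m r ≫ prod.fst))
      (pullback.fst m r ≫ prod.fst) pf2
  have hcomp : e₁ ≫ pullback.fst m r ≫ prod.snd = e₂ ≫ pullback.fst m r ≫ prod.fst := by
    simp only [e₁, e₂, pullback.lift_fst_assoc, prod.lift_snd, prod.lift_fst]
  let hh : pullback m r ⟶
      pullback (pullback.fst m r ≫ prod.snd) (pullback.fst m r ≫ prod.fst) :=
    pullback.lift e₁ e₂ hcomp
  refine ⟨hh ≫ tr, ?_⟩
  rw [Category.assoc, htr]
  apply Limits.prod.hom_ext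
  · simp [hh, e₁]
  · simp [hh, e₂]

/-- Characterisations of Mal'tsev categories among finitely complete categories:
every reflexive relation is an equivalence relation iff every reflexive relation is
symmetric iff every reflexive relation is transitive iff every relation
`R ⟶ X ⨯ Y` is difunctional iff every relation `R ⟶ X ⨯ X` is difunctional. -/
theorem stmt_3 :
    List.TFAE
      [∀ (R X : C) (r : R ⟶ X ⨯ X), Mono r → IsReflexiveRel r → IsEquivalenceRel r,
       ∀ (R X : C) (r : R ⟶ X ⨯ X), Mono r → IsReflexiveRel r → IsSymmetricRel r,
       ∀ (R X : C) (r : R ⟶ X ⨯ X), Mono r → IsReflexiveRel r → IsTransitiveRel r,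
       ∀ (R X Y : C) (r : R ⟶ X ⨯ Y), Mono r → IsDifunctional r,
       ∀ (R X : C) (r : R ⟶ X ⨯ X), Mono r → IsDifunctional r] := by
  tfae_have 1 → 2 := fun h R X r hm hr => (h R X r hm hr).2.1
  tfae_have 1 → 3 := fun h R X r hm hr => (h R X r hm hr).2.2
  tfae_have 2 → 4 := by
    intro h R X Y r hm
    haveI := hm
    obtain ⟨g, hg⟩ := h _ R (pullback.fst (prod.map (r ≫ prod.fst) (r ≫ prod.snd)) r)
      pullback.fst_of_mono (reflT r)
    rw [IsDifunctional]
    exact lemA r _ _ (by apply Limits.prod.hom_ext <;> simp) g hg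
  tfae_have 3 → 4 := by
    intro h R X Y r hm
    haveI := hm
    obtain ⟨g, hg⟩ := lemB r (prod.map (r ≫ prod.fst) (r ≫ prod.snd))
      (by simp) (by simp)
      (h _ R (pullback.fst (prod.map (r ≫ prod.fst) (r ≫ prod.snd)) r)
        pullback.fst_of_mono (reflT r))
    rw [IsDifunctional]
    exact lemA r _ _ (by apply Limits.prod.hom_ext <;> simp) g hg
  tfae_have 4 → 5 := fun h R X r hm => h R X X r hm
  tfae_have 5 → 1 := by
    intro h R X r hm hr
    obtain ⟨d, hd⟩ := hr
    have hdf : d ≫ r ≫ prod.fst = 𝟙 X := by rw [← Category.assoc, hd]; simp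
    have hds : d ≫ r ≫ prod.snd = 𝟙 X := by rw [← Category.assoc, hd]; simp
    have hdif := h R X r hm
    rw [IsDifunctional] at hdif
    refine ⟨⟨d, hd⟩, ?_, ?_⟩
    · -- symmetric
      obtain ⟨q, hq⟩ := lemC r _ _ hdif
        (prod.lift ((r ≫ prod.fst) ≫ d) ((r ≫ prod.snd) ≫ d)) (𝟙 R)
        (by apply Limits.prod.hom_ext <;>
          simp [hdf, hds, reassoc_of% hdf, reassoc_of% hds])
      refine ⟨q, ?_⟩
      rw [hq]
      apply Limits.prod.hom_ext <;>
        simp [hdf, hds, reassoc_of% hdf, reassoc_of% hds]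
    · -- transitive
      have hc : prod.lift (pullback.snd (r ≫ prod.snd) (r ≫ prod.fst))
            (pullback.fst (r ≫ prod.snd) (r ≫ prod.fst)) ≫
            prod.map (r ≫ prod.fst) (r ≫ prod.snd) =
          (pullback.fst (r ≫ prod.snd) (r ≫ prod.fst) ≫ (r ≫ prod.snd) ≫ d) ≫ r := by
        apply Limits.prod.hom_ext
        · simp only [Category.assoc, prod.lift_fst_assoc, prod.map_fst, prod.lift_fst]
          rw [← pullback.condition]
          rw [hdf]
          simp
        · simp only [prod.lift_snd_assoc, prod.map_snd, Category.assoc]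
          rw [hds]
          simp
      obtain ⟨q, hq⟩ := lemC r _ _ hdif
        (prod.lift (pullback.snd (r ≫ prod.snd) (r ≫ prod.fst))
          (pullback.fst (r ≫ prod.snd) (r ≫ prod.fst)))
        (pullback.fst (r ≫ prod.snd) (r ≫ prod.fst) ≫ (r ≫ prod.snd) ≫ d) hc
      refine ⟨q, ?_⟩
      rw [hq]
      apply Limits.prod.hom_ext <;> simp
  tfae_finish
end

section
/- Let C be a regular Mal'tsev category. Consider a commutative cube in C with the following data: morphisms f : X ⟶ Y, g : Z ⟶ Y, h : U ⟶ V, k : W ⟶ V, where g and k are split epimorphisms with given sections g' : Y ⟶ Z and k' : V ⟶ W (so g ∘ g' = id and k ∘ k' = id); morphisms p : X ⟶ U, q : Z ⟶ W, r : Y ⟶ V satisfying h ∘ p = r ∘ f, k ∘ q = r ∘ g and q ∘ g' = k' ∘ r. Form the pullback X ×_Y Z of f and g and the pullback U ×_V W of h and k, and let t : X ×_Y Z ⟶ U ×_V W be the comparison morphism induced by p and q. If p and q are regular epimorphisms, then t is a regular epimorphism. -/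
open CategoryTheory CategoryTheory.Limits

universe v u

variable {C : Type u} [Category.{v} C]

/-- A morphism is a regular epimorphism if it is the coequalizer of some parallel pair. -/
def IsRegularEpi' {X Y : C} (f : X ⟶ Y) : Prop := Nonempty (RegularEpi f)

variable [HasFiniteLimits C]

/-- Composing a regular epimorphism with an isomorphism yields a regular epimorphism. -/
noncomputable def regularEpiCompIso {A B B' : C} (e : A ⟶ B) (s : B ⟶ B') (re : RegularEpi e) [IsIso s] :
    RegularEpi (e ≫ s) where
  W := re.W
  left := re.left
  right := re.right
  w := by rw [← Category.assoc, ← Category.assoc, re.w]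
  isColimit := by
    refine Cofork.IsColimit.mk _
      (fun sk => inv s ≫ (Cofork.IsColimit.desc' re.isColimit sk.π sk.condition).1)
      (fun sk => ?_) (fun sk m hm => ?_)
    · have h := (Cofork.IsColimit.desc' re.isColimit sk.π sk.condition).2
      simp only [Cofork.π_ofπ, Category.assoc]
      rw [IsIso.hom_inv_id_assoc]
      simpa using h
    · have h := (Cofork.IsColimit.desc' re.isColimit sk.π sk.condition).2
      rw [← IsIso.inv_hom_id_assoc s m]
      congr 1
      apply Cofork.IsColimit.hom_ext re.isColimit
      simp only [Cofork.π_ofπ] at h ⊢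
      rw [h]
      simpa using hm

theorem barr
    (hcoeq : ∀ {X Y : C} (f : X ⟶ Y), HasCoequalizer (pullback.fst f f) (pullback.snd f f))
    (hstab : ∀ {X Y Z : C} (f : X ⟶ Y) (g : Z ⟶ Y),
      IsRegularEpi' f → IsRegularEpi' (pullback.snd f g))
    {A B : C} (f : A ⟶ B) :
    ∃ (I : C) (e : A ⟶ I) (s : I ⟶ B), Nonempty (RegularEpi e) ∧ Mono s ∧ e ≫ s = f := by
  haveI := hcoeq f
  let a := pullback.fst f f
  let b := pullback.snd f f
  let e : A ⟶ coequalizer a b := coequalizer.π a b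
  let s : coequalizer a b ⟶ B := coequalizer.desc f pullback.condition
  have hes : e ≫ s = f := coequalizer.π_desc _ _
  -- comparison K = pullback f f → P = pullback s f
  let c1 : pullback f f ⟶ pullback s f :=
    pullback.lift (a ≫ e) b (by rw [Category.assoc, hes]; exact pullback.condition)
  have T1 : IsPullback a c1 e (pullback.fst s f) := by
    have big : IsPullback a (c1 ≫ pullback.snd s f) (e ≫ s) f := by
      rw [hes, pullback.lift_snd]
      exact IsPullback.of_hasPullback f f
    exact big.of_bot (pullback.lift_fst _ _ _).symm (IsPullback.of_hasPullback s f)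
  -- comparison P → Ks = pullback s s
  let c2 : pullback s f ⟶ pullback s s :=
    pullback.lift (pullback.fst s f) (pullback.snd s f ≫ e)
      (by rw [Category.assoc, hes]; exact pullback.condition)
  have T2 : IsPullback (pullback.snd s f) c2 e (pullback.snd s s) := by
    have big : IsPullback (pullback.snd s f) (c2 ≫ pullback.fst s s) (e ≫ s) s := by
      rw [hes, pullback.lift_fst]
      exact (IsPullback.of_hasPullback s f).flip
    exact big.of_bot (pullback.lift_snd _ _ _).symm (IsPullback.of_hasPullback s s).flip
  -- both comparisons are epis
  have hre : IsRegularEpi' e := ⟨coequalizerRegular a b⟩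
  have epi_of_pb : ∀ {P A' B' D : C} {p1 : P ⟶ A'} {p2 : P ⟶ B'} {fa : A' ⟶ D} {fb : B' ⟶ D},
      IsPullback p1 p2 fa fb → IsRegularEpi' fa → Epi p2 := by
    intro P A' B' D p1 p2 fa fb hpb hf
    obtain ⟨i⟩ := hstab fa fb hf
    haveI := isRegularEpi_of_regularEpi i
    rw [← hpb.isoPullback_hom_snd]
    exact epi_comp _ _
  haveI hc1 : Epi c1 := epi_of_pb T1 hre
  haveI hc2 : Epi c2 := epi_of_pb T2 hre
  -- kernel pair of s is trivial
  have hks : pullback.fst s s = pullback.snd s s := by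
    rw [← cancel_epi c2, ← cancel_epi c1]
    have h1 : c1 ≫ c2 ≫ pullback.fst s s = a ≫ e := by
      rw [pullback.lift_fst, pullback.lift_fst]
    have h2 : c1 ≫ c2 ≫ pullback.snd s s = b ≫ e := by
      rw [pullback.lift_snd, ← Category.assoc, pullback.lift_snd]
    rw [h1, h2]
    exact coequalizer.condition a b
  refine ⟨_, e, s, ⟨coequalizerRegular a b⟩, ⟨fun {T} x y hxy => ?_⟩, hes⟩
  have : pullback.lift x y hxy ≫ pullback.fst s s = x := pullback.lift_fst _ _ _
  rw [← this, hks, pullback.lift_snd]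

theorem strongEpi_isRegularEpi
    (hcoeq : ∀ {X Y : C} (f : X ⟶ Y), HasCoequalizer (pullback.fst f f) (pullback.snd f f))
    (hstab : ∀ {X Y Z : C} (f : X ⟶ Y) (g : Z ⟶ Y),
      IsRegularEpi' f → IsRegularEpi' (pullback.snd f g))
    {A B : C} (f : A ⟶ B) (hf : StrongEpi f) : IsRegularEpi' f := by
  obtain ⟨I, e, s, ⟨re⟩, hm, hes⟩ := barr hcoeq hstab f
  haveI := isRegularEpi_of_regularEpi re; haveI := hm
  haveI : StrongEpi (e ≫ s) := by rw [hes]; exact hf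
  haveI : StrongEpi s := strongEpi_of_strongEpi e s
  haveI : IsIso s := isIso_of_mono_of_strongEpi s
  exact ⟨hes ▸ regularEpiCompIso e s re⟩

theorem strongEpi_of_isRegularEpi {A B : C} {f : A ⟶ B} (hf : IsRegularEpi' f) : StrongEpi f := by
  obtain ⟨i⟩ := hf; haveI := isRegularEpi_of_regularEpi i; infer_instance

theorem strongEpi_snd_of_isPullback
    (hstab : ∀ {X Y Z : C} (f : X ⟶ Y) (g : Z ⟶ Y),
      IsRegularEpi' f → IsRegularEpi' (pullback.snd f g))
    {P A B D : C} {p1 : P ⟶ A} {p2 : P ⟶ B} {fa : A ⟶ D} {fb : B ⟶ D}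
    (hpb : IsPullback p1 p2 fa fb) (hf : IsRegularEpi' fa) : StrongEpi p2 := by
  obtain ⟨i⟩ := hstab fa fb hf
  haveI := isRegularEpi_of_regularEpi i
  rw [← hpb.isoPullback_hom_snd]
  exact strongEpi_comp _ _

attribute [local simp] prod.lift_fst prod.lift_snd prod.lift_fst_assoc prod.lift_snd_assoc

/-- The Mal'tsev step: the comparison to the pullback of a split epi is a strong epi. -/
theorem maltsev_comparison
    (hcoeq : ∀ {X Y : C} (f : X ⟶ Y), HasCoequalizer (pullback.fst f f) (pullback.snd f f))
    (hstab : ∀ {X Y Z : C} (f : X ⟶ Y) (g : Z ⟶ Y),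
      IsRegularEpi' f → IsRegularEpi' (pullback.snd f g))
    (hmal : ∀ (R X : C) (r : R ⟶ X ⨯ X), Mono r → IsReflexiveRel r → IsEquivalenceRel r)
    {Z Y W V : C}
    (g : Z ⟶ Y) (k : W ⟶ V) (g' : Y ⟶ Z) (k' : V ⟶ W) (q : Z ⟶ W) (r : Y ⟶ V)
    (hgg' : g' ≫ g = 𝟙 Y) (hkk' : k' ≫ k = 𝟙 V)
    (hkq : q ≫ k = g ≫ r) (hqg' : g' ≫ q = r ≫ k')
    (hq : IsRegularEpi' q) :
    StrongEpi (pullback.lift g q hkq.symm : Z ⟶ pullback r k) := by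
  -- image factorization of (g,q) : Z ⟶ Y ⨯ W
  obtain ⟨S, e, s, ⟨re⟩, hm, hes⟩ := barr hcoeq hstab (prod.lift g q)
  haveI := isRegularEpi_of_regularEpi re; haveI := hm
  have A1 := reassoc_of% hes
  have A2 := reassoc_of% hgg'
  have A3 := reassoc_of% hkk'
  have A4 := reassoc_of% hkq.symm
  have A5 := reassoc_of% hqg'
  have hT : pullback.fst q (pullback.snd r k) ≫ q =
      pullback.snd q (pullback.snd r k) ≫ pullback.snd r k := pullback.condition
  have hT' := reassoc_of% hT
  have hN : pullback.snd r k ≫ k = pullback.fst r k ≫ r := pullback.condition.symm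
  have hN' := reassoc_of% hN
  have hcond : (s ≫ prod.fst) ≫ r = (s ≫ prod.snd) ≫ k := by
    rw [← cancel_epi e]
    simp only [← Category.assoc]
    rw [Category.assoc e s prod.fst, Category.assoc e s prod.snd]
    simp [A1, hkq.symm]
  let m : S ⟶ pullback r k := pullback.lift (s ≫ prod.fst) (s ≫ prod.snd) hcond
  have hm1 : m ≫ pullback.fst r k = s ≫ prod.fst := pullback.lift_fst _ _ _
  have hm2 : m ≫ pullback.snd r k = s ≫ prod.snd := pullback.lift_snd _ _ _
  haveI hmono : Mono m := by
    have : m ≫ prod.lift (pullback.fst r k) (pullback.snd r k) = s := by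
      apply Limits.prod.hom_ext <;> simp [hm1, hm2]
    exact mono_of_mono_fac this
  have hem : e ≫ m = pullback.lift g q hkq.symm := by
    apply pullback.hom_ext
    · rw [Category.assoc, hm1, pullback.lift_fst, ← Category.assoc, hes, prod.lift_fst]
    · rw [Category.assoc, hm2, pullback.lift_snd, ← Category.assoc, hes, prod.lift_snd]
  -- the reflexive relation on S
  let bg : S ⨯ S ⟶ Y ⨯ W :=
    prod.lift (prod.fst ≫ s ≫ prod.fst) (prod.snd ≫ s ≫ prod.snd)
  let ρ : pullback bg s ⟶ S ⨯ S := pullback.fst bg s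
  haveI : Mono ρ := pullback.fst_of_mono
  have hrefl : IsReflexiveRel ρ := by
    refine ⟨pullback.lift (prod.lift (𝟙 S) (𝟙 S)) (𝟙 S) ?_, pullback.lift_fst _ _ _⟩
    apply Limits.prod.hom_ext <;> simp [bg]
  obtain ⟨-, -, ⟨t, ht⟩⟩ := hmal _ _ ρ inferInstance hrefl
  -- the covering of pullback r k
  obtain ⟨req⟩ := hstab q (pullback.snd r k) hq
  haveI := isRegularEpi_of_regularEpi req
  have hbg : ∀ (T' : C) (u w : T' ⟶ S), prod.lift u w ≫ bg =
      prod.lift (u ≫ s ≫ prod.fst) (w ≫ s ≫ prod.snd) := by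
    intro T' u w
    apply Limits.prod.hom_ext <;> simp [bg]
  -- three generalized elements of S : x, ypt, zpt
  -- x = (sT ≫ fstN ≫ g') ≫ e, ypt = (fT ≫ g ≫ g') ≫ e, zpt = fT ≫ e
  have hx1 : (pullback.snd q (pullback.snd r k) ≫ pullback.fst r k ≫ g' ≫ e) ≫ s ≫ prod.fst =
      pullback.snd q (pullback.snd r k) ≫ pullback.fst r k := by
    simp [A1, A2, hgg', hqg', hkq.symm, hT, hN]
  have hx2 : (pullback.snd q (pullback.snd r k) ≫ pullback.fst r k ≫ g' ≫ e) ≫ s ≫ prod.snd =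
      pullback.snd q (pullback.snd r k) ≫ pullback.fst r k ≫ r ≫ k' := by
    simp [A1, A5, hgg', hqg', hkq.symm, hT, hN]
  have hy1 : (pullback.fst q (pullback.snd r k) ≫ g ≫ g' ≫ e) ≫ s ≫ prod.fst =
      pullback.fst q (pullback.snd r k) ≫ g := by
    simp [A1, A2, hgg', hqg', hkq.symm, hT, hN]
  have hy2 : (pullback.fst q (pullback.snd r k) ≫ g ≫ g' ≫ e) ≫ s ≫ prod.snd =
      (pullback.snd q (pullback.snd r k) ≫ pullback.fst r k ≫ g' ≫ e) ≫ s ≫ prod.snd := by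
    simp [A1, A2, A4, A5, hgg', hqg', hkq.symm, hT, hT', hN, hN']
  have hz1 : (pullback.fst q (pullback.snd r k) ≫ e) ≫ s ≫ prod.fst =
      pullback.fst q (pullback.snd r k) ≫ g := by simp [A1]
  have hz2 : (pullback.fst q (pullback.snd r k) ≫ e) ≫ s ≫ prod.snd =
      pullback.fst q (pullback.snd r k) ≫ q := by simp [A1]
  -- two generalized elements of the relation
  let ρ₁ : pullback q (pullback.snd r k) ⟶ pullback bg s := pullback.lift
    (prod.lift (pullback.snd q (pullback.snd r k) ≫ pullback.fst r k ≫ g' ≫ e)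
      (pullback.fst q (pullback.snd r k) ≫ g ≫ g' ≫ e))
    (pullback.snd q (pullback.snd r k) ≫ pullback.fst r k ≫ g' ≫ e)
    (by rw [hbg]; apply Limits.prod.hom_ext
        · simpa using hx1.trans hx1.symm
        · simpa using hy2)
  let ρ₂ : pullback q (pullback.snd r k) ⟶ pullback bg s := pullback.lift
    (prod.lift (pullback.fst q (pullback.snd r k) ≫ g ≫ g' ≫ e)
      (pullback.fst q (pullback.snd r k) ≫ e))
    (pullback.fst q (pullback.snd r k) ≫ e)
    (by rw [hbg]; apply Limits.prod.hom_ext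
        · simpa using hy1.trans hz1.symm
        · simp)
  have hρ₁ : ρ₁ ≫ ρ = prod.lift _ _ := pullback.lift_fst _ _ _
  have hρ₂ : ρ₂ ≫ ρ = prod.lift _ _ := pullback.lift_fst _ _ _
  let τ : pullback q (pullback.snd r k) ⟶ pullback (ρ ≫ prod.snd) (ρ ≫ prod.fst) :=
    pullback.lift ρ₁ ρ₂ (by
      rw [← Category.assoc, ← Category.assoc, hρ₁, hρ₂]
      simp)
  let l : pullback q (pullback.snd r k) ⟶ S := τ ≫ t ≫ pullback.snd bg s
  have hl : l ≫ s = prod.lift (pullback.snd q (pullback.snd r k) ≫ pullback.fst r k)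
      (pullback.fst q (pullback.snd r k) ≫ q) := by
    have hRcond : ρ ≫ bg = pullback.snd bg s ≫ s := pullback.condition
    have step1 : l ≫ s = τ ≫ (t ≫ ρ) ≫ bg := by
      show (τ ≫ t ≫ pullback.snd bg s) ≫ s = _
      simp only [Category.assoc]
      rw [← pullback.condition]
    rw [step1, ht]
    have e1 : τ ≫ pullback.fst (ρ ≫ prod.snd) (ρ ≫ prod.fst) = ρ₁ := pullback.lift_fst _ _ _
    have e2 : τ ≫ pullback.snd (ρ ≫ prod.snd) (ρ ≫ prod.fst) = ρ₂ := pullback.lift_snd _ _ _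
    have hbig : τ ≫ prod.lift
        (pullback.fst (ρ ≫ prod.snd) (ρ ≫ prod.fst) ≫ ρ ≫ prod.fst)
        (pullback.snd (ρ ≫ prod.snd) (ρ ≫ prod.fst) ≫ ρ ≫ prod.snd) =
        prod.lift (pullback.snd q (pullback.snd r k) ≫ pullback.fst r k ≫ g' ≫ e)
          (pullback.fst q (pullback.snd r k) ≫ e) := by
      apply Limits.prod.hom_ext
      · simp only [Category.assoc, prod.lift_fst, reassoc_of% e1, reassoc_of% hρ₁]
      · simp only [Category.assoc, prod.lift_snd, reassoc_of% e2, reassoc_of% hρ₂]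
    rw [← Category.assoc, hbig, hbg, hx1, hz2]
  have hlm : l ≫ m = pullback.snd q (pullback.snd r k) := by
    apply pullback.hom_ext
    · rw [Category.assoc, hm1, ← Category.assoc, hl, prod.lift_fst]
    · rw [Category.assoc, hm2, ← Category.assoc, hl, prod.lift_snd, hT]
  haveI : StrongEpi (pullback.snd q (pullback.snd r k)) := inferInstance
  haveI : StrongEpi (l ≫ m) := by rw [hlm]; infer_instance
  haveI : StrongEpi m := strongEpi_of_strongEpi l m
  haveI : IsIso m := isIso_of_mono_of_strongEpi m
  rw [← hem]
  exact strongEpi_comp e m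

/-- In a regular Mal'tsev category, given a commutative cube whose left and right faces
are pullbacks of split epimorphisms `g` and `k` (with sections `g'` and `k'`), if the
horizontal comparison maps `p` and `q` are regular epimorphisms then so is the induced
comparison morphism `t : X ×_Y Z ⟶ U ×_V W` between the pullbacks. -/
theorem stmt_7
    -- C is a regular category:
    (hcoeq : ∀ {X Y : C} (f : X ⟶ Y),
      HasCoequalizer (pullback.fst f f) (pullback.snd f f))
    (hstab : ∀ {X Y Z : C} (f : X ⟶ Y) (g : Z ⟶ Y),
      IsRegularEpi' f → IsRegularEpi' (pullback.snd f g))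
    -- C is a Mal'tsev category:
    (hmal : ∀ (R X : C) (r : R ⟶ X ⨯ X), Mono r → IsReflexiveRel r → IsEquivalenceRel r)
    -- the data of the cube:
    {X Y Z U V W : C}
    (f : X ⟶ Y) (g : Z ⟶ Y) (h : U ⟶ V) (k : W ⟶ V)
    (g' : Y ⟶ Z) (k' : V ⟶ W)
    (p : X ⟶ U) (q : Z ⟶ W) (r : Y ⟶ V)
    (hgg' : g' ≫ g = 𝟙 Y) (hkk' : k' ≫ k = 𝟙 V)
    (hhp : p ≫ h = f ≫ r) (hkq : q ≫ k = g ≫ r) (hqg' : g' ≫ q = r ≫ k')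
    (hp : IsRegularEpi' p) (hq : IsRegularEpi' q) :
    IsRegularEpi' (pullback.map f g h k p q r hhp.symm hkq.symm) := by
  -- the comparison to the pullback of split epis (Mal'tsev step)
  have hv : StrongEpi (pullback.lift g q hkq.symm : Z ⟶ pullback r k) :=
    maltsev_comparison hcoeq hstab hmal g k g' k' q r hgg' hkk' hkq hqg' hq
  set v : Z ⟶ pullback r k := pullback.lift g q hkq.symm with hvdef
  -- the intermediate pullback M = X ×_V W
  have hMcond : ∀ _x : Unit, True := fun _ => trivial
  let M := pullback (f ≫ r) k
  let ψ : M ⟶ pullback r k := pullback.lift (pullback.fst (f ≫ r) k ≫ f)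
    (pullback.snd (f ≫ r) k) (by rw [Category.assoc]; exact pullback.condition)
  have P2 : IsPullback (pullback.fst (f ≫ r) k) ψ f (pullback.fst r k) := by
    have big : IsPullback (pullback.fst (f ≫ r) k) (ψ ≫ pullback.snd r k) (f ≫ r) k := by
      rw [pullback.lift_snd]
      exact IsPullback.of_hasPullback (f ≫ r) k
    exact big.of_bot (pullback.lift_fst _ _ _).symm (IsPullback.of_hasPullback r k)
  -- u : pullback f g ⟶ M
  let u : pullback f g ⟶ M := pullback.lift (pullback.fst f g) (pullback.snd f g ≫ q)
    (by simp only [Category.assoc, hkq, pullback.condition_assoc])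
  have Tu : IsPullback (pullback.snd f g) u v ψ := by
    have hcomm : pullback.snd f g ≫ v = u ≫ ψ := by
      apply pullback.hom_ext
      · rw [Category.assoc, pullback.lift_fst, Category.assoc, pullback.lift_fst,
          ← Category.assoc, pullback.lift_fst, pullback.condition]
      · rw [Category.assoc, pullback.lift_snd, Category.assoc, pullback.lift_snd,
          pullback.lift_snd]
    have big : IsPullback (pullback.snd f g) (u ≫ pullback.fst (f ≫ r) k)
        (v ≫ pullback.fst r k) f := by
      rw [pullback.lift_fst, pullback.lift_fst]
      exact (IsPullback.of_hasPullback f g).flip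
    exact big.of_bot hcomm P2.flip
  -- w : M ⟶ pullback h k
  let w : M ⟶ pullback h k := pullback.lift (pullback.fst (f ≫ r) k ≫ p)
    (pullback.snd (f ≫ r) k)
    (by rw [Category.assoc, hhp]; exact pullback.condition)
  have Tw : IsPullback (pullback.fst (f ≫ r) k) w p (pullback.fst h k) := by
    have big : IsPullback (pullback.fst (f ≫ r) k) (w ≫ pullback.snd h k) (p ≫ h) k := by
      rw [pullback.lift_snd, hhp]
      exact IsPullback.of_hasPullback (f ≫ r) k
    exact big.of_bot (pullback.lift_fst _ _ _).symm (IsPullback.of_hasPullback h k)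
  -- the comparison map decomposes
  have hdecomp : pullback.map f g h k p q r hhp.symm hkq.symm = u ≫ w := by
    apply pullback.hom_ext
    · rw [pullback.lift_fst, Category.assoc, pullback.lift_fst, ← Category.assoc,
        pullback.lift_fst]
    · rw [pullback.lift_snd, Category.assoc, pullback.lift_snd, pullback.lift_snd]
  have hu : StrongEpi u :=
    strongEpi_snd_of_isPullback hstab Tu (strongEpi_isRegularEpi hcoeq hstab v hv)
  have hw : StrongEpi w := strongEpi_snd_of_isPullback hstab Tw hp
  haveI := hu; haveI := hw
  apply strongEpi_isRegularEpi hcoeq hstab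
  rw [hdecomp]
  exact strongEpi_comp u w
end

section
/- Let X, Y, Z, U, V, W be types, each equipped with a Mal'tsev operation, and let f : X → Y, g : Z → Y, h : U → V, k : W → V, p : X → U, q : Z → W, r : Y → V, g' : Y → Z, k' : V → W be maps, all of which commute with the Mal'tsev operations (i.e., each map φ satisfies φ (p₁ a b c) = p₂ (φ a) (φ b) (φ c) where p₁, p₂ are the operations on its domain and codomain). Assume g ∘ g' = id, k ∘ k' = id, h ∘ p = r ∘ f, k ∘ q = r ∘ g, q ∘ g' = k' ∘ r, and that p and q are surjective. Then the comparison map between pullbacks is surjective: for every u in U and w in W with h u = k w, there exist x in X and z in Z such that f x = g z, p x = u and q z = w. -/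
/-- A map `φ : A → B` commutes with Mal'tsev operations `pA` on `A` and `pB` on `B`. -/
def MaltsevHom {A B : Type*} (pA : A → A → A → A) (pB : B → B → B → B)
    (φ : A → B) : Prop :=
  ∀ a b c, φ (pA a b c) = pB (φ a) (φ b) (φ c)

/-- In a commutative cube of types with Mal'tsev operations, where the left and right
faces are pullbacks, the downward maps `g, k` are split epimorphisms with sections
`g', k'`, and `p, q` are surjective, the comparison map between the pullbacks is
surjective. -/
theorem stmt_8 {X Y Z U V W : Type*}
    (pX : X → X → X → X) (pY : Y → Y → Y → Y) (pZ : Z → Z → Z → Z)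
    (pU : U → U → U → U) (pV : V → V → V → V) (pW : W → W → W → W)
    (hX : IsMaltsevOp pX) (hY : IsMaltsevOp pY) (hZ : IsMaltsevOp pZ)
    (hU : IsMaltsevOp pU) (hV : IsMaltsevOp pV) (hW : IsMaltsevOp pW)
    (f : X → Y) (g : Z → Y) (h : U → V) (k : W → V)
    (p : X → U) (q : Z → W) (r : Y → V) (g' : Y → Z) (k' : V → W)
    (hf : MaltsevHom pX pY f) (hg : MaltsevHom pZ pY g) (hh : MaltsevHom pU pV h)
    (hk : MaltsevHom pW pV k) (hp : MaltsevHom pX pU p) (hq : MaltsevHom pZ pW q)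
    (hr : MaltsevHom pY pV r) (hg' : MaltsevHom pY pZ g') (hk' : MaltsevHom pV pW k')
    (hgg' : ∀ y, g (g' y) = y) (hkk' : ∀ v, k (k' v) = v)
    (hhp : ∀ x, h (p x) = r (f x)) (hkq : ∀ z, k (q z) = r (g z))
    (hqg' : ∀ y, q (g' y) = k' (r y))
    (hpsurj : Function.Surjective p) (hqsurj : Function.Surjective q) :
    ∀ (u : U) (w : W), h u = k w →
      ∃ (x : X) (z : Z), f x = g z ∧ p x = u ∧ q z = w := by
  intro u w huw
  obtain ⟨x₀, hx₀⟩ := hpsurj u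
  obtain ⟨z₁, hz₁⟩ := hqsurj w
  refine ⟨x₀, pZ z₁ (g' (g z₁)) (g' (f x₀)), ?_, hx₀, ?_⟩
  · rw [hg, hgg', hY.2, hgg']
  · rw [hq, hz₁, hqg', hqg', ← hkq, ← hhp, hz₁, hx₀, huw, hW.1]
end
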